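/- Let h : ℝ → ℝ be four times continuously differentiable in a neighborhood of x ∈ ℝ with h(x) ≠ 0, and set s = −(1/3)·h''(x)/h(x). Then the exact-coefficient MQ-RBF reconstruction is fourth-order accurate: with c(η) = (√(4η + 1) + 1)/(4·√(1 + η)), there exist C, Δx₀ > 0 such that for all 0 < Δx < Δx₀ (in particular small enough that 1 + s·Δx² > 0 and 1 + 4s·Δx² > 0), |c(s·Δx²)·(h̄₀ + h̄₊) − h(x)| ≤ C·Δx⁴. -/

import Mathlib

open Set


lemma iter_step {Φ g G : ℝ → ℝ} {s : Set ℝ} (hs : UniqueDiffOn ℝ s) (n : ℕ)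
    (hprev : Set.EqOn (iteratedDerivWithin n Φ s) g s)
    (hg : ∀ t ∈ s, HasDerivAt g (G t) t) :
    Set.EqOn (iteratedDerivWithin (n+1) Φ s) G s := fun t ht => by
  rw [iteratedDerivWithin_succ, derivWithin_congr hprev (hprev ht)]
  exact ((hg t ht).hasDerivWithinAt).derivWithin (hs t ht)

lemma taylor_core (h : ℝ → ℝ) (x : ℝ) (hh : ContDiffAt ℝ 4 h x) :
    ∃ M δ : ℝ, 0 < δ ∧ ∀ d : ℝ, 0 < d → d < δ →
      |((∫ ξ in (x-d)..x, h ξ) + ∫ ξ in x..(x+d), h ξ)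
          - (2*h x*d + (iteratedDeriv 2 h x/3)*d^3)| ≤ M * d^5 := by
  obtain ⟨u, hu, hhu⟩ := hh.contDiffOn le_rfl (by simp)
  obtain ⟨ε, εpos, hball⟩ := Metric.mem_nhds_iff.mp hu
  set U : Set ℝ := Ioo (x-ε) (x+ε) with hU_def
  have hUsub : U ⊆ u := by rw [hU_def, ← Real.ball_eq_Ioo]; exact hball
  have hU : IsOpen U := isOpen_Ioo
  have hhU : ContDiffOn ℝ 4 h U := hhu.mono hUsub
  have hxU : x ∈ U := by constructor <;> [linarith; linarith]
  -- derivative chain for h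
  have hsplit : DifferentiableOn ℝ h U ∧ ContDiffOn ℝ 3 (deriv h) U := by
    have := (contDiffOn_succ_iff_deriv_of_isOpen (n := 3) hU).mp (by exact_mod_cast hhU)
    exact ⟨this.1, this.2.2⟩
  set d1 := deriv h with hd1_def
  have hsplit2 : DifferentiableOn ℝ d1 U ∧ ContDiffOn ℝ 2 (deriv d1) U := by
    have := (contDiffOn_succ_iff_deriv_of_isOpen (n := 2) hU).mp (by exact_mod_cast hsplit.2)
    exact ⟨this.1, this.2.2⟩
  set d2 := deriv d1 with hd2_def
  have hsplit3 : DifferentiableOn ℝ d2 U ∧ ContDiffOn ℝ 1 (deriv d2) U := by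
    have := (contDiffOn_succ_iff_deriv_of_isOpen (n := 1) hU).mp (by exact_mod_cast hsplit2.2)
    exact ⟨this.1, this.2.2⟩
  set d3 := deriv d2 with hd3_def
  have hDh : ∀ y ∈ U, HasDerivAt h (d1 y) y := fun y hy =>
    ((hsplit.1 y hy).differentiableAt (hU.mem_nhds hy)).hasDerivAt
  have hDd1 : ∀ y ∈ U, HasDerivAt d1 (d2 y) y := fun y hy =>
    ((hsplit2.1 y hy).differentiableAt (hU.mem_nhds hy)).hasDerivAt
  have hDd2 : ∀ y ∈ U, HasDerivAt d2 (d3 y) y := fun y hy =>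
    ((hsplit3.1 y hy).differentiableAt (hU.mem_nhds hy)).hasDerivAt
  -- the primitive
  set F : ℝ → ℝ := fun y => ∫ t in x..y, h t with hF_def
  have hcont : ContinuousOn h U := hhU.continuousOn
  have hDF : ∀ y ∈ U, HasDerivAt F (h y) y := by
    intro y hy
    apply intervalIntegral.integral_hasDerivAt_right
    · apply ContinuousOn.intervalIntegrable
      exact hcont.mono (Set.OrdConnected.uIcc_subset Set.ordConnected_Ioo hxU hy)
    · exact hcont.stronglyMeasurableAtFilter hU y hy
    · exact hcont.continuousAt (hU.mem_nhds hy)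
  have hF5 : ContDiffOn ℝ 5 F U := by
    rw [show (5 : WithTop ℕ∞) = 4 + 1 from by norm_num]
    refine (contDiffOn_succ_iff_deriv_of_isOpen hU).mpr ⟨?_, by simp, ?_⟩
    · exact fun y hy => ((hDF y hy).differentiableAt).differentiableWithinAt
    · exact (by exact_mod_cast hhU : ContDiffOn ℝ 4 h U).congr fun y hy => (hDF y hy).deriv
  -- the symmetrized function
  set Φ : ℝ → ℝ := fun t => F (x + t) - F (x - t) with hΦ_def
  set δ : ℝ := ε/2 with hδ_def
  have δpos : 0 < δ := by positivity
  have hIccV : Icc (0:ℝ) δ ⊆ Ioo (-ε) ε := fun t ht => ⟨by linarith [ht.1], by linarith [ht.2]⟩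
  have hmaps1 : MapsTo (fun t : ℝ => x + t) (Ioo (-ε) ε) U := by
    intro t ht
    simp only [hU_def, mem_Ioo] at *
    constructor <;> linarith [ht.1, ht.2]
  have hmaps2 : MapsTo (fun t : ℝ => x - t) (Ioo (-ε) ε) U := by
    intro t ht
    simp only [hU_def, mem_Ioo] at *
    constructor <;> linarith [ht.1, ht.2]
  have haff1 : ContDiffOn ℝ 5 (fun t : ℝ => x + t) (Ioo (-ε) ε) :=
    (contDiff_const.add contDiff_id).contDiffOn
  have haff2 : ContDiffOn ℝ 5 (fun t : ℝ => x - t) (Ioo (-ε) ε) :=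
    (contDiff_const.sub contDiff_id).contDiffOn
  have hΦ5 : ContDiffOn ℝ 5 Φ (Icc 0 δ) :=
    (((hF5.comp haff1 hmaps1).sub (hF5.comp haff2 hmaps2)).mono hIccV)
  have hUD : UniqueDiffOn ℝ (Icc (0:ℝ) δ) := uniqueDiffOn_Icc δpos
  obtain ⟨M0, hM0⟩ := (isCompact_Icc).exists_bound_of_continuousOn
    (hΦ5.continuousOn_iteratedDerivWithin (by exact_mod_cast le_refl (5:ℕ)) hUD)
  -- iterated derivatives of Φ at 0
  set g1 : ℝ → ℝ := fun t => h (x+t) + h (x-t) with hg1_def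
  set g2 : ℝ → ℝ := fun t => d1 (x+t) - d1 (x-t) with hg2_def
  set g3 : ℝ → ℝ := fun t => d2 (x+t) + d2 (x-t) with hg3_def
  set g4 : ℝ → ℝ := fun t => d3 (x+t) - d3 (x-t) with hg4_def
  have hin : ∀ t ∈ Icc (0:ℝ) δ, x + t ∈ U ∧ x - t ∈ U := fun t ht =>
    ⟨hmaps1 (hIccV ht), hmaps2 (hIccV ht)⟩
  have hDg0 : ∀ t ∈ Icc (0:ℝ) δ, HasDerivAt Φ (g1 t) t := by
    intro t ht
    have A := (hDF _ (hin t ht).1).comp t ((hasDerivAt_id t).const_add x)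
    have B := (hDF _ (hin t ht).2).comp t ((hasDerivAt_id t).const_sub x)
    convert A.sub B using 1
    any_goals rfl
    simp [hg1_def]; try ring
  have hDg1 : ∀ t ∈ Icc (0:ℝ) δ, HasDerivAt g1 (g2 t) t := by
    intro t ht
    have A := (hDh _ (hin t ht).1).comp t ((hasDerivAt_id t).const_add x)
    have B := (hDh _ (hin t ht).2).comp t ((hasDerivAt_id t).const_sub x)
    convert A.add B using 1
    any_goals rfl
    simp [hg2_def]; try ring
  have hDg2 : ∀ t ∈ Icc (0:ℝ) δ, HasDerivAt g2 (g3 t) t := by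
    intro t ht
    have A := (hDd1 _ (hin t ht).1).comp t ((hasDerivAt_id t).const_add x)
    have B := (hDd1 _ (hin t ht).2).comp t ((hasDerivAt_id t).const_sub x)
    convert A.sub B using 1
    any_goals rfl
    simp [hg3_def]; try ring
  have hDg3 : ∀ t ∈ Icc (0:ℝ) δ, HasDerivAt g3 (g4 t) t := by
    intro t ht
    have A := (hDd2 _ (hin t ht).1).comp t ((hasDerivAt_id t).const_add x)
    have B := (hDd2 _ (hin t ht).2).comp t ((hasDerivAt_id t).const_sub x)
    convert A.add B using 1
    any_goals rfl
    simp [hg4_def]; try ring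
  have e0 : Set.EqOn (iteratedDerivWithin 0 Φ (Icc 0 δ)) Φ (Icc 0 δ) := by
    intro t ht; simp
  have e1 := iter_step hUD 0 e0 hDg0
  have e2 := iter_step hUD 1 e1 hDg1
  have e3 := iter_step hUD 2 e2 hDg2
  have e4 := iter_step hUD 3 e3 hDg3
  have mem0 : (0:ℝ) ∈ Icc (0:ℝ) δ := ⟨le_refl 0, le_of_lt δpos⟩
  have v0 : iteratedDerivWithin 0 Φ (Icc 0 δ) 0 = 0 := by
    rw [e0 mem0]; simp [hΦ_def]
  have v1 : iteratedDerivWithin 1 Φ (Icc 0 δ) 0 = 2 * h x := by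
    rw [e1 mem0]; simp [hg1_def]; try ring
  have v2 : iteratedDerivWithin 2 Φ (Icc 0 δ) 0 = 0 := by
    rw [e2 mem0]; simp [hg2_def]
  have v3 : iteratedDerivWithin 3 Φ (Icc 0 δ) 0 = 2 * d2 x := by
    rw [e3 mem0]; simp [hg3_def]; try ring
  have v4 : iteratedDerivWithin 4 Φ (Icc 0 δ) 0 = 0 := by
    rw [e4 mem0]; simp [hg4_def]
  have hTval : ∀ d : ℝ, taylorWithinEval Φ 4 (Icc 0 δ) 0 d
      = 2*h x*d + (d2 x/3)*d^3 := by
    intro d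
    rw [taylor_within_apply]
    simp only [Finset.sum_range_succ, Finset.sum_range_zero, v0, v1, v2, v3, v4, smul_eq_mul]
    norm_num [Nat.factorial]
    ring
  have hd2eq : iteratedDeriv 2 h x = d2 x := by
    rw [iteratedDeriv_succ, iteratedDeriv_one]
  refine ⟨|M0|, δ, δpos, fun d hd0 hdδ => ?_⟩
  have hmemd : d ∈ Icc (0:ℝ) δ := ⟨le_of_lt hd0, le_of_lt hdδ⟩
  have hint : (∫ ξ in (x-d)..x, h ξ) + ∫ ξ in x..(x+d), h ξ = Φ d := by
    have h1 : Φ d = (∫ t in x..(x+d), h t) - ∫ t in x..(x-d), h t := rfl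
    rw [h1, intervalIntegral.integral_symm x (x-d)]
    ring
  rw [hint, hd2eq]
  have htb := taylor_mean_remainder_bound (n := 4) (le_of_lt δpos)
    (by exact_mod_cast hΦ5) hmemd (fun y hy => hM0 y hy)
  rw [hTval d, Real.norm_eq_abs] at htb
  norm_num [Nat.factorial] at htb
  have hd5 : (0:ℝ) ≤ d^5 := by positivity
  calc |Φ d - (2*h x*d + (d2 x/3)*d^3)| ≤ M0 * d^5 / 24 := htb
    _ ≤ |M0| * d^5 := by nlinarith [le_abs_self M0, abs_nonneg M0]


set_option maxHeartbeats 1000000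

lemma mq_sqrt_bound (η : ℝ) (hη : |η| ≤ 1/8) :
    |(Real.sqrt (4*η+1) + 1) / (4*Real.sqrt (1+η)) * (2 - η) - 1| ≤ 3 * η^2 := by
  obtain ⟨hη1, hη2⟩ := abs_le.mp hη
  set a := Real.sqrt (4*η+1) with ha_def
  set b := Real.sqrt (1+η) with hb_def
  have ha2 : a^2 = 4*η+1 := Real.sq_sqrt (by linarith)
  have hb2 : b^2 = 1+η := Real.sq_sqrt (by linarith)
  have ha0 : 0 ≤ a := Real.sqrt_nonneg _
  have hb0 : 0 ≤ b := Real.sqrt_nonneg _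
  have ha : (7:ℝ)/10 ≤ a := by nlinarith
  have hb : (9:ℝ)/10 ≤ b := by nlinarith
  have ha' : a ≤ 13/10 := by nlinarith
  have hb' : b ≤ 11/10 := by nlinarith
  have key : (a + 1) / (4*b) * (2 - η) - 1 = ((a+1)*(2-η) - 4*b)/(4*b) := by
    field_simp
  rw [key, abs_div, abs_of_pos (show (0:ℝ) < 4*b by positivity)]
  have hα : (a - (1+2*η)) * (a + (1+2*η)) = -(4*η^2) := by nlinarith
  have hβ : (b - (1+η/2)) * (b + (1+η/2)) = -(η^2/4) := by nlinarith
  have hα1 : -(3*η^2) ≤ a - (1+2*η) := by nlinarith [sq_nonneg η]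
  have hα2 : a - (1+2*η) ≤ 3*η^2 := by nlinarith [sq_nonneg η]
  have hβ1 : -(η^2/4) ≤ b - (1+η/2) := by nlinarith [sq_nonneg η]
  have hβ2 : b - (1+η/2) ≤ η^2/4 := by nlinarith [sq_nonneg η]
  have h2η : (0:ℝ) ≤ 2 - η := by linarith
  have hu : (a - (1+2*η))*(2-η) ≤ 3*η^2*(2-η) :=
    mul_le_mul_of_nonneg_right hα2 h2η
  have hl : -(3*η^2)*(2-η) ≤ (a - (1+2*η))*(2-η) :=
    mul_le_mul_of_nonneg_right hα1 h2η
  have hnum : |(a+1)*(2-η) - 4*b| ≤ 10*η^2 := by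
    rw [abs_le]; constructor <;> nlinarith [sq_nonneg η]
  rw [div_le_iff₀ (by positivity : (0:ℝ) < 4*b)]
  nlinarith [sq_nonneg η]

lemma mq_c_bound (η : ℝ) (hη : |η| ≤ 1/8) :
    |(Real.sqrt (4*η+1) + 1) / (4*Real.sqrt (1+η))| ≤ 1 := by
  obtain ⟨hη1, hη2⟩ := abs_le.mp hη
  have ha2 : (Real.sqrt (4*η+1))^2 = 4*η+1 := Real.sq_sqrt (by linarith)
  have hb2 : (Real.sqrt (1+η))^2 = 1+η := Real.sq_sqrt (by linarith)
  have ha0 : 0 ≤ Real.sqrt (4*η+1) := Real.sqrt_nonneg _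
  have hb0 : 0 ≤ Real.sqrt (1+η) := Real.sqrt_nonneg _
  have ha' : Real.sqrt (4*η+1) ≤ 13/10 := by nlinarith
  have hb : (9:ℝ)/10 ≤ Real.sqrt (1+η) := by nlinarith
  rw [abs_div, abs_of_nonneg (by positivity), abs_of_nonneg (by positivity)]
  rw [div_le_one (by positivity)]
  nlinarith

/-- With the adaptive shape parameter `s = −(1/3)h''(x)/h(x)` the
exact-coefficient k = 2 MQ-RBF reconstruction is fourth-order accurate. -/
theorem stmt_9 (h : ℝ → ℝ) (x : ℝ) (hh : ContDiffAt ℝ 4 h x) (hx : h x ≠ 0) :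
    ∃ C > 0, ∃ d₀ > 0, ∀ d : ℝ, 0 < d → d < d₀ →
      1 + (-(1 / 3) * iteratedDeriv 2 h x / h x) * d ^ 2 > 0 ∧
      1 + 4 * (-(1 / 3) * iteratedDeriv 2 h x / h x) * d ^ 2 > 0 ∧
      |(Real.sqrt (4 * (-(1 / 3) * iteratedDeriv 2 h x / h x * d ^ 2) + 1) + 1)
            / (4 * Real.sqrt (1 + -(1 / 3) * iteratedDeriv 2 h x / h x * d ^ 2))
            * ((1 / d) * (∫ ξ in (x - d)..x, h ξ) + (1 / d) * ∫ ξ in x..(x + d), h ξ)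
          - h x|
        ≤ C * d ^ 4 := by
  obtain ⟨M, δ, δpos, hM⟩ := taylor_core h x hh
  set s : ℝ := -(1 / 3) * iteratedDeriv 2 h x / h x with hs_def
  set d₀ : ℝ := min δ (Real.sqrt (1/(8*(|s|+1)))) with hd₀_def
  have hsq_pos : (0:ℝ) < 1/(8*(|s|+1)) := by positivity
  have hd₀pos : 0 < d₀ := lt_min δpos (Real.sqrt_pos.mpr hsq_pos)
  refine ⟨|M| + 3*s^2*|h x| + 1, by positivity, d₀, hd₀pos, fun d hd0 hdd₀ => ?_⟩
  have hdδ : d < δ := lt_of_lt_of_le hdd₀ (min_le_left _ _)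
  have hdsq : d^2 < 1/(8*(|s|+1)) := by
    have h1 : d < Real.sqrt (1/(8*(|s|+1))) := lt_of_lt_of_le hdd₀ (min_le_right _ _)
    calc d^2 < (Real.sqrt (1/(8*(|s|+1))))^2 := by nlinarith [Real.sqrt_nonneg (1/(8*(|s|+1)))]
      _ = 1/(8*(|s|+1)) := Real.sq_sqrt (le_of_lt hsq_pos)
  set η : ℝ := s * d^2 with hη_def
  have hηb : |η| ≤ 1/8 := by
    have h1 : |η| = |s| * d^2 := by
      rw [hη_def, abs_mul, abs_of_nonneg (by positivity : (0:ℝ) ≤ d^2)]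
    rw [h1]
    have h2 : |s| * d^2 ≤ (|s|+1) * d^2 := by nlinarith [abs_nonneg s, sq_nonneg d]
    have h3 : (|s|+1) * d^2 < (|s|+1) * (1/(8*(|s|+1))) := by
      apply mul_lt_mul_of_pos_left hdsq (by positivity)
    have h4 : (|s|+1) * (1/(8*(|s|+1))) = 1/8 := by
      field_simp
    linarith
  obtain ⟨hη1, hη2⟩ := abs_le.mp hηb
  have hη1' : -(1/8:ℝ) ≤ s * d^2 := hη1
  refine ⟨by linarith, by nlinarith [hη1'], ?_⟩
  -- notation for c
  set a : ℝ := Real.sqrt (4*η+1) with ha_def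
  set b : ℝ := Real.sqrt (1+η) with hb_def
  set c : ℝ := (a + 1) / (4*b) with hc_def
  -- the integral sum
  have hsum : (1 / d) * (∫ ξ in (x - d)..x, h ξ) + (1 / d) * ∫ ξ in x..(x + d), h ξ
      = (1/d) * ((∫ ξ in (x - d)..x, h ξ) + ∫ ξ in x..(x + d), h ξ) := by ring
  rw [hsum]
  set I : ℝ := (∫ ξ in (x - d)..x, h ξ) + ∫ ξ in x..(x + d), h ξ with hI_def
  set P : ℝ := 2*h x*d + (iteratedDeriv 2 h x/3)*d^3 with hP_def
  have hEb : |I - P| ≤ M * d^5 := hM d hd0 hdδ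
  -- h'' relation: η * h x = -(1/3) * iteratedDeriv 2 h x * d^2
  have hηh : (iteratedDeriv 2 h x / 3) * d^2 = -(η * h x) := by
    rw [hη_def, hs_def]; field_simp
  have hPd : (1/d) * P = (2 - η) * h x := by
    rw [hP_def]
    have : (iteratedDeriv 2 h x/3)*d^3 = ((iteratedDeriv 2 h x / 3) * d^2) * d := by ring
    rw [this, hηh]
    field_simp
    ring
  -- decomposition
  have hdec : c * ((1/d) * I) - h x
      = c * ((1/d) * (I - P)) + (c * (2 - η) - 1) * h x := by
    linear_combination c * hPd
  rw [hdec]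
  have hcb : |c| ≤ 1 := mq_c_bound η hηb
  have hφ : |c * (2 - η) - 1| ≤ 3 * η^2 := mq_sqrt_bound η hηb
  have hterm1 : |c * ((1/d) * (I - P))| ≤ |M| * d^4 := by
    rw [abs_mul, abs_mul]
    have h1 : |1/d| = 1/d := abs_of_pos (by positivity)
    rw [h1]
    have h2 : |I - P| ≤ |M| * d^5 := le_trans hEb (by nlinarith [le_abs_self M, pow_pos hd0 5])
    calc |c| * (1/d * |I - P|) ≤ 1 * (1/d * (|M| * d^5)) := by
          apply mul_le_mul hcb _ (by positivity) zero_le_one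
          apply mul_le_mul_of_nonneg_left h2 (by positivity)
      _ = |M| * d^4 := by field_simp
  have hterm2 : |(c * (2 - η) - 1) * h x| ≤ 3*s^2*|h x| * d^4 := by
    rw [abs_mul]
    have : 3 * η^2 = 3 * s^2 * d^4 := by rw [hη_def]; ring
    calc |c * (2 - η) - 1| * |h x| ≤ (3 * η^2) * |h x| :=
          mul_le_mul_of_nonneg_right hφ (abs_nonneg _)
      _ = 3*s^2*|h x| * d^4 := by rw [this]; ring
  calc |c * ((1/d) * (I - P)) + (c * (2 - η) - 1) * h x|
      ≤ |c * ((1/d) * (I - P))| + |(c * (2 - η) - 1) * h x| := abs_add_le _ _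
    _ ≤ |M| * d^4 + 3*s^2*|h x| * d^4 := add_le_add hterm1 hterm2
    _ ≤ (|M| + 3*s^2*|h x| + 1) * d^4 := by nlinarith [pow_pos hd0 4]
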